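/- For all reals x ≥ 0, y ≥ 0, all reals κ₁₂ ≥ 0, κ₁₃ ≥ 0, every real κ₃₂ > 0, and every m ∈ ℕ, the double sequence (n₁, n₂) ↦ x^{n₁} · y^{n₂} / (Γ(1 + κ₁₂·n₂ + κ₁₃·m + n₁) · Γ(1 + κ₃₂·n₂ + m)) is summable over ℕ × ℕ. (This is the convergence of the normalization series of the (γ₁, γ₃₂)-deformed vector coherent states.) -/

import Mathlib

open Real Nat

private lemma one_le_gamma_aux {t : ℝ} (ht : 2 ≤ t) : (1:ℝ) ≤ Real.Gamma t := by
  have h := Real.Gamma_strictMonoOn_Ici.monotoneOn (Set.self_mem_Ici)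
    (Set.mem_Ici.mpr ht) ht
  rwa [Real.Gamma_two] at h

private lemma half_le_gamma_aux {t : ℝ} (ht : 1 ≤ t) : (1:ℝ)/2 ≤ Real.Gamma t := by
  rcases le_or_gt 2 t with h2 | h2
  · linarith [one_le_gamma_aux h2]
  · have ht0 : t ≠ 0 := by positivity
    have h1 : Real.Gamma (t + 1) = t * Real.Gamma t := Real.Gamma_add_one ht0
    have h2' : (1:ℝ) ≤ Real.Gamma (t + 1) := one_le_gamma_aux (by linarith)
    have hp : 0 < Real.Gamma t := Real.Gamma_pos_of_pos (by linarith)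
    nlinarith

private lemma factorial_le_two_gamma_aux {a : ℝ} (ha : 0 ≤ a) (n : ℕ) :
    (n ! : ℝ) ≤ 2 * Real.Gamma (1 + a + n) := by
  rcases Nat.eq_zero_or_pos n with hn | hn
  · subst hn
    simp only [Nat.factorial_zero, Nat.cast_one, Nat.cast_zero, add_zero]
    linarith [half_le_gamma_aux (by linarith : (1:ℝ) ≤ 1 + a)]
  · have hn1 : (1:ℝ) ≤ n := by exact_mod_cast hn
    have hmem1 : ((n:ℝ) + 1) ∈ Set.Ici (2:ℝ) := by simp [Set.mem_Ici]; linarith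
    have hmem2 : (1 + a + (n:ℝ)) ∈ Set.Ici (2:ℝ) := by simp [Set.mem_Ici]; linarith
    have h := Real.Gamma_strictMonoOn_Ici.monotoneOn hmem1 hmem2 (by linarith)
    rw [Real.Gamma_nat_eq_factorial] at h
    have : 0 ≤ Real.Gamma (1 + a + n) := Real.Gamma_nonneg_of_nonneg (by linarith)
    linarith

private lemma pow_sub_le_factorial_aux (M : ℕ) : ∀ k, M ≤ k → M ^ (k - M) ≤ k ! := by
  intro k
  induction k with
  | zero => intro h; simp [Nat.le_zero.mp h]
  | succ k ih =>
    intro h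
    rcases Nat.lt_or_ge M (k+1) with h' | h'
    · have hMk : M ≤ k := Nat.lt_succ_iff.mp h'
      have : k + 1 - M = (k - M) + 1 := by omega
      rw [this, pow_succ, Nat.factorial_succ]
      calc M ^ (k - M) * M ≤ k ! * (k + 1) := Nat.mul_le_mul (ih hMk) (by omega)
        _ = (k + 1) * k ! := Nat.mul_comm _ _
    · have : M = k + 1 := le_antisymm h h'
      subst this
      simp [Nat.one_le_iff_ne_zero, Nat.factorial_ne_zero]

private lemma g_summable_aux (y κ : ℝ) (hy : 0 ≤ y) (hκ : 0 < κ) (m : ℕ) :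
    Summable fun n : ℕ => y ^ n / Real.Gamma (1 + κ * n + m) := by
  set q : ℕ := ⌈1/κ⌉₊ with hq_def
  have hq1 : 1 ≤ q := Nat.one_le_ceil_iff.mpr (by positivity)
  have hκq : 1 ≤ κ * q := by
    have h1 : (1/κ : ℝ) ≤ q := Nat.le_ceil _
    calc (1:ℝ) = κ * (1/κ) := by field_simp
      _ ≤ κ * q := by nlinarith
  set w : ℝ := 2 * (y + 1) with hw_def
  have hw1 : (1:ℝ) ≤ w := by simp [hw_def]; linarith
  have hw0 : (0:ℝ) < w := by linarith
  set M : ℕ := ⌈w ^ q⌉₊ with hM_def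
  have hwM : w ^ q ≤ M := Nat.le_ceil _
  have hM1 : 1 ≤ M := Nat.one_le_ceil_iff.mpr (by positivity)
  have hM0 : (0:ℝ) < M := by exact_mod_cast hM1
  set N : ℕ := (M + 1) * q with hN_def
  set C : ℝ := (M:ℝ) ^ (M + 1) with hC_def
  -- key pointwise bound for n ≥ N
  have key : ∀ n : ℕ, N ≤ n → y ^ n / Real.Gamma (1 + κ * n + m) ≤ C * (1/2) ^ n := by
    intro n hn
    set k : ℕ := ⌊κ * n⌋₊ with hk_def
    have hκn_nonneg : 0 ≤ κ * n := by positivity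
    have hκnN : (M + 1 : ℝ) ≤ κ * n := by
      have h1 : ((M + 1) * q : ℕ) ≤ (n:ℕ) := hn
      have h2 : ((M+1) * q : ℝ) ≤ n := by exact_mod_cast h1
      calc (M + 1 : ℝ) = (M + 1) * 1 := by ring
        _ ≤ (M + 1) * (κ * q) := by nlinarith [hM0]
        _ = κ * ((M+1) * q) := by ring
        _ ≤ κ * n := by nlinarith
    have hkM : M + 1 ≤ k := Nat.le_floor (by exact_mod_cast hκnN)
    have hk1 : 1 ≤ k := le_trans (by omega) hkM
    have hkle : (k : ℝ) ≤ κ * n := Nat.floor_le hκn_nonneg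
    have hklt : κ * n < k + 1 := Nat.lt_floor_add_one _
    -- Γ(1+κn+m) ≥ k!
    have hΓ : (k ! : ℝ) ≤ Real.Gamma (1 + κ * n + m) := by
      have hk1' : (1:ℝ) ≤ k := by exact_mod_cast hk1
      have hmem1 : ((k:ℝ) + 1) ∈ Set.Ici (2:ℝ) := by simp [Set.mem_Ici]; linarith
      have hmem2 : (1 + κ * n + (m:ℝ)) ∈ Set.Ici (2:ℝ) := by
        simp [Set.mem_Ici]
        have : (0:ℝ) ≤ m := Nat.cast_nonneg m
        linarith
      have h := Real.Gamma_strictMonoOn_Ici.monotoneOn hmem1 hmem2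
        (by have : (0:ℝ) ≤ m := Nat.cast_nonneg m; linarith)
      rwa [Real.Gamma_nat_eq_factorial] at h
    have hΓpos : 0 < Real.Gamma (1 + κ * n + m) := by
      apply Real.Gamma_pos_of_pos
      have : (0:ℝ) ≤ m := Nat.cast_nonneg m
      linarith
    have hfactpos : (0:ℝ) < (k ! : ℝ) := by exact_mod_cast Nat.factorial_pos k
    -- k! ≥ M^k / M^M
    have hfact : (M:ℝ) ^ k / (M:ℝ) ^ M ≤ (k ! : ℝ) := by
      have h1 : M ^ (k - M) ≤ k ! := pow_sub_le_factorial_aux M k (by omega)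
      have h2 : ((M:ℝ)) ^ (k - M) ≤ (k ! : ℝ) := by exact_mod_cast h1
      have h3 : (M:ℝ) ^ (k - M) * (M:ℝ) ^ M = (M:ℝ) ^ k := by
        rw [← pow_add]; congr 1; omega
      rw [div_le_iff₀ (by positivity)]
      calc (M:ℝ) ^ k = (M:ℝ) ^ (k - M) * (M:ℝ) ^ M := h3.symm
        _ ≤ (k ! : ℝ) * (M:ℝ) ^ M := by
            apply mul_le_mul_of_nonneg_right h2 (by positivity)
    -- w^n ≤ M^(k+1)
    have hwn : w ^ n ≤ (M:ℝ) ^ (k + 1) := by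
      have hnq : n ≤ q * (k + 1) := by
        have h1 : (n:ℝ) = n * 1 := by ring
        have h2 : (n:ℝ) ≤ n * (κ * q) := by nlinarith [Nat.cast_nonneg (α := ℝ) n]
        have h3 : (n:ℝ) * (κ * q) = (κ * n) * q := by ring
        have h4 : (κ * n) * q ≤ ((k:ℝ) + 1) * q := by
          apply mul_le_mul_of_nonneg_right (le_of_lt hklt) (Nat.cast_nonneg q)
        have h5 : (n:ℝ) ≤ ((k:ℝ) + 1) * q := by linarith
        have h6 : ((k+1) * q : ℕ) = ((k:ℝ)+1) * q := by push_cast; ring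
        have h7 : (n:ℝ) ≤ ((k+1) * q : ℕ) := by rw [h6]; exact h5
        have h8 : n ≤ (k+1) * q := by exact_mod_cast h7
        simpa [Nat.mul_comm] using h8
      calc w ^ n ≤ w ^ (q * (k + 1)) := pow_le_pow_right₀ hw1 hnq
        _ = (w ^ q) ^ (k + 1) := by rw [← pow_mul]
        _ ≤ (M:ℝ) ^ (k + 1) := pow_le_pow_left₀ (by positivity) hwM _
    -- combine
    have hyw : (0:ℝ) < w ^ n := by positivity
    have step1 : y ^ n / Real.Gamma (1 + κ * n + m) ≤ y ^ n / (k ! : ℝ) := by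
      apply div_le_div_of_nonneg_left (by positivity) hfactpos hΓ
    have step2 : y ^ n / (k ! : ℝ) ≤ y ^ n * (M:ℝ) ^ M / (M:ℝ) ^ k := by
      rw [div_le_div_iff₀ hfactpos (by positivity)]
      have hMk : (0:ℝ) < (M:ℝ) ^ k := by positivity
      have h' : (M:ℝ) ^ k ≤ (k ! : ℝ) * (M:ℝ) ^ M := by
        have := hfact
        rw [div_le_iff₀ (by positivity)] at this
        linarith
      nlinarith [pow_nonneg hy n]
    have step3 : y ^ n * (M:ℝ) ^ M / (M:ℝ) ^ k ≤ C * (1/2) ^ n := by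
      have hMk1 : (M:ℝ) ^ k = (M:ℝ) ^ (k+1) / M := by
        rw [pow_succ]; field_simp
      rw [hMk1, div_div_eq_mul_div, div_le_iff₀ (by positivity)]
      have hyn : y ^ n ≤ (w / 2) ^ n := by
        exact pow_le_pow_left₀ hy (by rw [hw_def]; linarith) n
      have hhalf : ((1:ℝ)/2) ^ n * w ^ n = (w/2) ^ n := by
        rw [← mul_pow]; congr 1; ring
      calc y ^ n * (M:ℝ) ^ M * M = (M:ℝ) ^ (M+1) * y ^ n := by rw [pow_succ]; ring
        _ ≤ (M:ℝ) ^ (M+1) * (w/2) ^ n := by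
            apply mul_le_mul_of_nonneg_left hyn (by positivity)
        _ = C * ((1/2) ^ n * w ^ n) := by rw [hhalf, hC_def]
        _ ≤ C * ((1/2) ^ n * (M:ℝ) ^ (k+1)) := by
            apply mul_le_mul_of_nonneg_left _ (by positivity)
            apply mul_le_mul_of_nonneg_left hwn (by positivity)
        _ = C * (1/2) ^ n * (M:ℝ) ^ (k+1) := by ring
    linarith
  -- conclude summability
  rw [← summable_nat_add_iff N]
  refine Summable.of_nonneg_of_le (fun n => ?_) (fun n => ?_)
    ((summable_geometric_of_lt_one (r := (1/2:ℝ)) (by norm_num) (by norm_num)).mul_left (C * (1/2) ^ N))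
  · 
    have hΓpos : 0 < Real.Gamma (1 + κ * (n + N : ℕ) + m) := by
      apply Real.Gamma_pos_of_pos
      have h1 : (0:ℝ) ≤ κ * (n + N : ℕ) := by positivity
      have h2 : (0:ℝ) ≤ m := Nat.cast_nonneg m
      linarith
    positivity
  · have h := key (n + N) (by omega)
    calc y ^ (n + N) / Real.Gamma (1 + κ * (n + N : ℕ) + m) ≤ C * (1/2) ^ (n + N) := h
      _ = (C * (1/2) ^ N) * (1/2) ^ n := by rw [pow_add]; ring

/-- Convergence of the normalization series of the `(γ₁, γ₃₂)`-deformed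
vector coherent states. -/
theorem norm_series_summable_gamma1_gamma32 (x y κ₁₂ κ₁₃ κ₃₂ : ℝ)
    (hx : 0 ≤ x) (hy : 0 ≤ y)
    (h12 : 0 ≤ κ₁₂) (h13 : 0 ≤ κ₁₃) (h32 : 0 < κ₃₂) (m : ℕ) :
    Summable fun p : ℕ × ℕ =>
      x ^ p.1 * y ^ p.2 /
        (Real.Gamma (1 + κ₁₂ * p.2 + κ₁₃ * m + p.1) *
          Real.Gamma (1 + κ₃₂ * p.2 + m)) := by
  have hf : Summable fun n : ℕ => 2 * x ^ n / (n ! : ℝ) := by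
    have := (Real.summable_pow_div_factorial x).mul_left 2
    simpa [mul_div_assoc] using this
  have hg := g_summable_aux y κ₃₂ hy h32 m
  have hprod : Summable fun p : ℕ × ℕ =>
      (2 * x ^ p.1 / (p.1 ! : ℝ)) * (y ^ p.2 / Real.Gamma (1 + κ₃₂ * p.2 + m)) := by
    apply hf.mul_of_nonneg hg
    · intro n; positivity
    · intro n
      have hΓpos : 0 < Real.Gamma (1 + κ₃₂ * n + m) := by
        apply Real.Gamma_pos_of_pos
        have h1 : (0:ℝ) ≤ κ₃₂ * n := by positivity
        have h2 : (0:ℝ) ≤ m := Nat.cast_nonneg m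
        linarith
      positivity
  apply Summable.of_nonneg_of_le _ _ hprod
  · intro p
    have h1 : (0:ℝ) < Real.Gamma (1 + κ₁₂ * p.2 + κ₁₃ * m + p.1) := by
      apply Real.Gamma_pos_of_pos
      have : (0:ℝ) ≤ κ₁₂ * p.2 + κ₁₃ * m + p.1 := by positivity
      linarith
    have h2 : (0:ℝ) < Real.Gamma (1 + κ₃₂ * p.2 + m) := by
      apply Real.Gamma_pos_of_pos
      have : (0:ℝ) ≤ κ₃₂ * p.2 + m := by positivity
      linarith
    positivity
  · intro p
    have ha : (0:ℝ) ≤ κ₁₂ * p.2 + κ₁₃ * m := by positivity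
    have heq : 1 + κ₁₂ * p.2 + κ₁₃ * m + (p.1:ℝ) = 1 + (κ₁₂ * p.2 + κ₁₃ * m) + p.1 := by
      ring
    have hfac : (p.1 ! : ℝ) ≤ 2 * Real.Gamma (1 + κ₁₂ * p.2 + κ₁₃ * m + p.1) := by
      rw [heq]; exact factorial_le_two_gamma_aux ha p.1
    have hG1 : (0:ℝ) < Real.Gamma (1 + κ₁₂ * p.2 + κ₁₃ * m + p.1) := by
      apply Real.Gamma_pos_of_pos
      have : (0:ℝ) ≤ κ₁₂ * p.2 + κ₁₃ * m + p.1 := by positivity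
      linarith
    have hG2 : (0:ℝ) < Real.Gamma (1 + κ₃₂ * p.2 + m) := by
      apply Real.Gamma_pos_of_pos
      have : (0:ℝ) ≤ κ₃₂ * p.2 + m := by positivity
      linarith
    have hF : (0:ℝ) < (p.1 ! : ℝ) := by exact_mod_cast Nat.factorial_pos p.1
    have hA : (0:ℝ) ≤ x ^ p.1 * y ^ p.2 := by positivity
    have hrhs : 2 * x ^ p.1 / (p.1 ! : ℝ) * (y ^ p.2 / Real.Gamma (1 + κ₃₂ * p.2 + m)) =
        2 * (x ^ p.1 * y ^ p.2) / ((p.1 ! : ℝ) * Real.Gamma (1 + κ₃₂ * p.2 + m)) := by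
      field_simp
    rw [hrhs, div_le_div_iff₀ (by positivity) (by positivity)]
    have hxy : (0:ℝ) ≤ x ^ p.1 * y ^ p.2 * Real.Gamma (1 + κ₃₂ * p.2 + m) := by positivity
    nlinarith [mul_le_mul_of_nonneg_left hfac hxy]
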